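/- Let X be a uniformly convex and uniformly smooth Banach space, C ⊆ X nonempty closed convex, Π_C the generalized metric projection. Suppose {x_n} is norm bounded, J x_n ⇀ J x weak* in X*, and Π_C(x_n) → y in norm for some y ∈ C. Then y = Π_C(x). -/

import Mathlib

open Filter

/-- if {xₙ} is bounded, Jxₙ ⇀ Jx weak* and Π_C(xₙ) → y in norm,
then y = Π_C(x). -/
theorem stmt16 {X : Type*} [NormedAddCommGroup X] [NormedSpace ℝ X]
    (J : X → StrongDual ℝ X)
    (hdual : ∀ w, J w w = ‖w‖ ^ 2 ∧ ‖J w‖ = ‖w‖)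
    (hJcont : Continuous J)
    (C : Set X) (hCne : C.Nonempty) (hCcl : IsClosed C) (hCcv : Convex ℝ C)
    (PiC : X → X)
    (hchar : ∀ a b, PiC a = b ↔ b ∈ C ∧ ∀ z ∈ C, 0 ≤ (J a - J b) (b - z))
    (x : ℕ → X) (x₀ : X) (y : X) (hy : y ∈ C)
    (hbdd : ∃ M : ℝ, ∀ n, ‖x n‖ ≤ M)
    (hweakstar : ∀ z : X, Tendsto (fun n => J (x n) z) atTop (nhds (J x₀ z)))
    (hconv : Tendsto (fun n => PiC (x n)) atTop (nhds y)) :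
    y = PiC x₀ := by
  obtain ⟨M, hM⟩ := hbdd
  symm
  rw [hchar]
  refine ⟨hy, fun z hz => ?_⟩
  set u : ℕ → X := fun n => PiC (x n) with hu
  have hprop : ∀ n, u n ∈ C ∧ ∀ w ∈ C, 0 ≤ (J (x n) - J (u n)) (u n - w) := by
    intro n
    exact (hchar (x n) (u n)).mp rfl
  -- limit of J (u n) (u n - z)
  have h1 : Tendsto (fun n => (J (u n)) (u n - z)) atTop (nhds ((J y) (y - z))) := by
    have hJu : Tendsto (fun n => J (u n)) atTop (nhds (J y)) :=
      (hJcont.tendsto y).comp hconv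
    have huz : Tendsto (fun n => u n - z) atTop (nhds (y - z)) := hconv.sub_const z
    have := (isBoundedBilinearMap_apply (𝕜 := ℝ) (E := X) (F := ℝ)).continuous.tendsto
        ((J y, y - z))
    exact this.comp (hJu.prodMk_nhds huz)
  -- limit of J (x n) (u n - z)
  have h2 : Tendsto (fun n => (J (x n)) (u n - z)) atTop (nhds ((J x₀) (y - z))) := by
    have heq : ∀ n, (J (x n)) (u n - z) = (J (x n)) (y - z) + (J (x n)) (u n - y) := by
      intro n
      rw [← map_add]
      congr 1
      abel
    have herr : Tendsto (fun n => (J (x n)) (u n - y)) atTop (nhds 0) := by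
      refine squeeze_zero_norm (f := fun n => (J (x n)) (u n - y)) (t₀ := atTop) (a := fun n => M * ‖u n - y‖) (fun n => ?_) ?_
      · calc ‖(J (x n)) (u n - y)‖ ≤ ‖J (x n)‖ * ‖u n - y‖ :=
              (J (x n)).le_opNorm _
          _ ≤ M * ‖u n - y‖ := by
              apply mul_le_mul_of_nonneg_right _ (norm_nonneg _)
              rw [(hdual (x n)).2]; exact hM n
      · have : Tendsto (fun n => ‖u n - y‖) atTop (nhds 0) :=
          tendsto_norm_zero.comp (by simpa using hconv.sub_const y)
        simpa using this.const_mul M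
    have := (hweakstar (y - z)).add herr
    simpa [← heq] using this
  have hlim : Tendsto (fun n => (J (x n) - J (u n)) (u n - z)) atTop
      (nhds ((J x₀ - J y) (y - z))) := by
    simp only [ContinuousLinearMap.sub_apply]
    exact h2.sub h1
  exact ge_of_tendsto hlim (Eventually.of_forall fun n => (hprop n).2 z hz)
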